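/- K-fractional revival occurs in X at time τ > 0 if and only if the density matrix (1/|K|)·D_K is periodic at time τ, i.e., U(τ)·(1/|K|)D_K·U(-τ) = (1/|K|)D_K, where U(t) = e^{-itA} and D_K = Σ_{a∈K} e_a e_a^T. -/

import Mathlib

open Matrix

/-- Transition matrix `U(t) = e^{-itA}` of the continuous-time quantum walk. -/
noncomputable def transU {n : ℕ} (A : Matrix (Fin n) (Fin n) ℝ) (t : ℝ) :
    Matrix (Fin n) (Fin n) ℂ :=
  NormedSpace.exp ((-Complex.I * (t : ℂ)) • A.map (Complex.ofReal))

/-- `D_K = Σ_{a ∈ K} e_a e_a^T`, the diagonal 0-1 matrix with 1's on K. -/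
def DKmat {n : ℕ} (K : Finset (Fin n)) : Matrix (Fin n) (Fin n) ℂ :=
  Matrix.of fun i j => if i = j ∧ i ∈ K then 1 else 0

lemma transU_mul_transU_neg {n : ℕ} (A : Matrix (Fin n) (Fin n) ℝ) (t : ℝ) :
    transU A t * transU A (-t) = 1 := by
  unfold transU
  rw [← Matrix.exp_add_of_commute _ _ ((Commute.refl _).smul_left _ |>.smul_right _)]
  push_cast
  rw [← add_smul]
  ring_nf
  simp [NormedSpace.exp_zero]

lemma DKmat_eq_diagonal {n : ℕ} (K : Finset (Fin n)) :
    DKmat K = Matrix.diagonal (fun i => if i ∈ K then (1 : ℂ) else 0) := by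
  ext i j
  simp only [DKmat, Matrix.diagonal, of_apply]
  split_ifs with h h1 h2 <;> simp_all

/-- K-fractional revival occurs at time τ > 0 iff the density matrix
`(1/|K|)·D_K` is periodic at time τ. -/
theorem kfr_iff_density_periodic {n : ℕ} (A : Matrix (Fin n) (Fin n) ℝ)
    (hA : A.IsSymm) (K : Finset (Fin n)) (hK : K.Nonempty) (τ : ℝ) (hτ : 0 < τ) :
    (∀ a b : Fin n, ((a ∈ K ∧ b ∉ K) ∨ (a ∉ K ∧ b ∈ K)) → transU A τ a b = 0) ↔
      transU A τ * ((K.card : ℂ)⁻¹ • DKmat K) * transU A (-τ)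
        = (K.card : ℂ)⁻¹ • DKmat K := by
  set U := transU A τ with hU
  set V := transU A (-τ) with hV
  have hUV : U * V = 1 := transU_mul_transU_neg A τ
  have hVU : V * U = 1 := by
    have := transU_mul_transU_neg A (-τ)
    rwa [neg_neg, ← hU, ← hV] at this
  have hc : (K.card : ℂ)⁻¹ ≠ 0 := by
    simp [Finset.card_ne_zero_of_mem hK.choose_spec]
  have key : (∀ a b : Fin n, ((a ∈ K ∧ b ∉ K) ∨ (a ∉ K ∧ b ∈ K)) → U a b = 0) ↔
      U * DKmat K = DKmat K * U := by
    constructor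
    · intro h
      ext a b
      rw [DKmat_eq_diagonal, Matrix.mul_diagonal, Matrix.diagonal_mul]
      by_cases ha : a ∈ K <;> by_cases hb : b ∈ K <;> simp [ha, hb]
      · exact (h a b (Or.inl ⟨ha, hb⟩)).symm
      · exact h a b (Or.inr ⟨ha, hb⟩)
    · intro h a b hab
      have := congrFun (congrFun h a) b
      rw [DKmat_eq_diagonal, Matrix.mul_diagonal, Matrix.diagonal_mul] at this
      rcases hab with ⟨ha, hb⟩ | ⟨ha, hb⟩ <;> simp [ha, hb] at this <;> first | exact this.symm | exact this
  rw [key]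
  constructor
  · intro h
    rw [Matrix.mul_smul, Matrix.smul_mul, h, mul_assoc, hUV, mul_one]
  · intro h
    rw [Matrix.mul_smul, Matrix.smul_mul] at h
    have h2 : U * DKmat K * V = DKmat K := smul_right_injective _ hc h
    calc U * DKmat K = U * DKmat K * (V * U) := by rw [hVU, mul_one]
      _ = (U * DKmat K * V) * U := by noncomm_ring
      _ = DKmat K * U := by rw [h2]
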